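/- Let x_1, …, x_n be real numbers such that no two distinct nonempty subsets of {x_1,…,x_n} have the same arithmetic mean. Then there exists a unique k* ∈ {1,…,n} such that for every k ∈ {1,…,n}, Σ_{i=1}^k x_{((k*+i−1) mod n)+1} ≥ (k/n) Σ_{i=1}^n x_i; that is, the walk whose increments are the cyclic shift of (x_1,…,x_n) starting after position k* stays (weakly) above the straight line joining 0 to Σ_{i=1}^n x_i. -/

import Mathlib

noncomputable def Qw (n : ℕ) (hn : 0 < n) (x : Fin n → ℝ) (m : ℕ) : ℝ :=
  ∑ i ∈ Finset.range m, (x ⟨i % n, Nat.mod_lt _ hn⟩ - (∑ j, x j) / n)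

lemma Qw_period (n : ℕ) (hn : 0 < n) (x : Fin n → ℝ) (m : ℕ) :
    Qw n hn x (m + n) = Qw n hn x m := by
  set z : ℕ → ℝ := fun i => x ⟨i % n, Nat.mod_lt _ hn⟩ - (∑ j, x j) / n with hz
  have hper : ∀ i, z (i + n) = z i := by
    intro i; simp [hz, Nat.add_mod_right]
  have hshift : ∀ m, ∑ j ∈ Finset.range n, z (m + j) = ∑ j ∈ Finset.range n, z j := by
    intro m
    induction m with
    | zero => simp
    | succ m ih =>
      have h1 : ∑ j ∈ Finset.range n, z (m + 1 + j)
          = ∑ j ∈ Finset.range n, z (m + (j + 1)) := by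
        apply Finset.sum_congr rfl; intro j _; ring_nf
      have h2 : ∑ j ∈ Finset.range (n+1), z (m + j)
          = ∑ j ∈ Finset.range n, z (m + (j+1)) + z (m + 0) := Finset.sum_range_succ' _ n
      have h3 : ∑ j ∈ Finset.range (n+1), z (m + j)
          = ∑ j ∈ Finset.range n, z (m + j) + z (m + n) := Finset.sum_range_succ _ n
      have h4 : z (m + n) = z (m + 0) := by rw [Nat.add_zero]; exact hper m
      rw [h1]
      have : ∑ j ∈ Finset.range n, z (m + (j+1)) = ∑ j ∈ Finset.range n, z (m + j) := by
        have := h2.symm.trans h3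
        rw [h4] at this
        linarith
      rw [this, ih]
  have hzero : ∑ j ∈ Finset.range n, z j = 0 := by
    have : ∑ j ∈ Finset.range n, x ⟨j % n, Nat.mod_lt _ hn⟩ = ∑ j, x j := by
      rw [← Fin.sum_univ_eq_sum_range (fun j => x ⟨j % n, Nat.mod_lt _ hn⟩) n]
      apply Finset.sum_congr rfl
      intro i _
      congr 1
      exact Fin.ext (Nat.mod_eq_of_lt i.isLt)
    simp only [hz, Finset.sum_sub_distrib, this, Finset.sum_const, Finset.card_range, nsmul_eq_mul]
    field_simp
    ring
  have : Qw n hn x (m + n) = Qw n hn x m + ∑ j ∈ Finset.range n, z (m + j) := by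
    unfold Qw
    rw [Finset.sum_range_add]
  rw [this, hshift, hzero, add_zero]

lemma Qw_def (n : ℕ) (hn : 0 < n) (x : Fin n → ℝ) (m : ℕ) :
    Qw n hn x m = ∑ i ∈ Finset.range m, (x ⟨i % n, Nat.mod_lt _ hn⟩ - (∑ j, x j) / n) := rfl

lemma Qw_mod (n : ℕ) (hn : 0 < n) (x : Fin n → ℝ) (m : ℕ) :
    Qw n hn x m = Qw n hn x (m % n) := by
  induction m using Nat.strong_induction_on with
  | _ m ih =>
    by_cases h : m < n
    · rw [Nat.mod_eq_of_lt h]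
    · push_neg at h
      have h1 : m - n + n = m := Nat.sub_add_cancel h
      have h2 : m - n < m := Nat.sub_lt (lt_of_lt_of_le hn h) hn
      rw [← h1, Qw_period, ih _ h2, Nat.add_mod_right]

lemma Qw_inj (n : ℕ) (hn : 0 < n) (x : Fin n → ℝ)
    (hmeans : ∀ A B : Finset (Fin n), A.Nonempty → B.Nonempty → A ≠ B →
      (∑ i ∈ A, x i) / (A.card : ℝ) ≠ (∑ i ∈ B, x i) / (B.card : ℝ))
    (a b : ℕ) (ha : a < n) (hb : b < n) (hQ : Qw n hn x a = Qw n hn x b) : a = b := by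
  haveI : Nonempty (Fin n) := ⟨⟨0, hn⟩⟩
  -- wlog a < b and derive contradiction
  have key : ∀ a b : ℕ, a < b → b < n → Qw n hn x a ≠ Qw n hn x b := by
    intro a b hab hbn
    have hmlt : ∀ m ∈ Finset.Ico a b, m < n := fun m hm =>
      lt_of_lt_of_le (Finset.mem_Ico.mp hm).2 (le_of_lt hbn)
    set A : Finset (Fin n) := (Finset.Ico a b).attachFin hmlt with hA
    have hsum : ∑ i ∈ A, x i = ∑ m ∈ Finset.Ico a b, x ⟨m % n, Nat.mod_lt _ hn⟩ := by
      rw [hA]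
      apply Finset.sum_bij (fun (i : Fin n) (_ : i ∈ (Finset.Ico a b).attachFin hmlt) => (i : ℕ))
      · intro i hi; exact (Finset.mem_attachFin hmlt).mp hi
      · intro i hi j hj hij; exact Fin.ext hij
      · intro m hm
        refine ⟨⟨m, hmlt m hm⟩, ?_, rfl⟩
        rw [Finset.mem_attachFin]; exact hm
      · intro i hi
        congr 1
        exact Fin.ext (Nat.mod_eq_of_lt i.isLt).symm
    have hcard : (A.card : ℕ) = b - a := by rw [hA, Finset.card_attachFin, Nat.card_Ico]
    have hne : A.Nonempty := by
      rw [← Finset.card_pos, hcard]; omega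
    have hAne : A ≠ Finset.univ := by
      intro h
      have := hcard
      rw [h, Finset.card_univ, Fintype.card_fin] at this
      omega
    intro hQ
    -- Qw b - Qw a = sum over Ico a b of z
    have hdiff : Qw n hn x b - Qw n hn x a
        = ∑ m ∈ Finset.Ico a b, (x ⟨m % n, Nat.mod_lt _ hn⟩ - (∑ j, x j) / n) := by
      rw [Qw_def, Qw_def, ← Finset.sum_Ico_eq_sub _ (le_of_lt hab)]
    rw [hQ, sub_self] at hdiff
    have hSz : ∑ m ∈ Finset.Ico a b, (x ⟨m % n, Nat.mod_lt _ hn⟩ - (∑ j, x j) / n)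
        = ∑ i ∈ A, x i - (b - a : ℕ) * ((∑ j, x j) / n) := by
      rw [Finset.sum_sub_distrib, hsum, Finset.sum_const, Nat.card_Ico, nsmul_eq_mul]
    rw [hSz] at hdiff
    have hmeanA : (∑ i ∈ A, x i) / (A.card : ℝ) = (∑ j, x j) / n := by
      have hcardR : (A.card : ℝ) = ((b - a : ℕ) : ℝ) := by rw [hcard]
      have hba : (0:ℝ) < ((b - a : ℕ) : ℝ) := by
        have : 0 < b - a := by omega
        exact_mod_cast this
      rw [hcardR]
      field_simp at hdiff ⊢
      linarith
    have huniv : (∑ i ∈ Finset.univ, x i) / ((Finset.univ : Finset (Fin n)).card : ℝ)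
        = (∑ j, x j) / n := by
      rw [Finset.card_univ, Fintype.card_fin]
    exact hmeans A Finset.univ hne Finset.univ_nonempty hAne (hmeanA.trans huniv.symm)
  by_contra hne
  rcases Nat.lt_or_ge a b with h | h
  · exact key a b h hb hQ
  · have : b < a := by omega
    exact key b a this ha hQ.symm

lemma cond_iff (n : ℕ) (hn : 0 < n) (x : Fin n → ℝ) (kstar k : ℕ) (_hk : 1 ≤ k) :
    ((k : ℝ) / (n : ℝ) * ∑ i, x i
        ≤ ∑ i ∈ Finset.Icc 1 k, x ⟨(kstar + i - 1) % n, Nat.mod_lt _ hn⟩)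
      ↔ Qw n hn x kstar ≤ Qw n hn x (kstar + k) := by
  have h1 : ∑ i ∈ Finset.Icc 1 k, x ⟨(kstar + i - 1) % n, Nat.mod_lt _ hn⟩
      = ∑ j ∈ Finset.range k, x ⟨(kstar + j) % n, Nat.mod_lt _ hn⟩ := by
    rw [show Finset.Icc 1 k = Finset.Ico 1 (k+1) by rfl, Finset.sum_Ico_eq_sum_range]
    simp only [Nat.add_sub_cancel]
    apply Finset.sum_congr rfl
    intro j _
    have : kstar + (1 + j) - 1 = kstar + j := by omega
    simp only [this]
  have h2 : Qw n hn x (kstar + k) - Qw n hn x kstar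
      = ∑ j ∈ Finset.range k, (x ⟨(kstar + j) % n, Nat.mod_lt _ hn⟩ - (∑ i, x i) / n) := by
    rw [Qw_def, Qw_def, ← Finset.sum_Ico_eq_sub _ (Nat.le_add_right kstar k),
      Finset.sum_Ico_eq_sum_range]
    simp only [Nat.add_sub_cancel_left]
  rw [Finset.sum_sub_distrib, Finset.sum_const, Finset.card_range, nsmul_eq_mul] at h2
  rw [h1]
  have h3 : (k : ℝ) / (n : ℝ) * ∑ i, x i = (k : ℝ) * ((∑ i, x i) / n) := by ring
  constructor
  · intro h; linarith
  · intro h; linarith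


/-- Lemma 3: if no two distinct nonempty subsets of `x 0, …, x (n-1)` have the same arithmetic
mean, then there is a unique cyclic shift of the increments after which the walk stays weakly
above the straight line joining `0` to the total sum. -/
theorem unique_cyclic_shift_above_chord
    (n : ℕ) (hn : 0 < n) (x : Fin n → ℝ)
    (hmeans : ∀ A B : Finset (Fin n), A.Nonempty → B.Nonempty → A ≠ B →
      (∑ i ∈ A, x i) / (A.card : ℝ) ≠ (∑ i ∈ B, x i) / (B.card : ℝ)) :
    ∃! kstar : ℕ, kstar ∈ Finset.Icc 1 n ∧
      ∀ k ∈ Finset.Icc 1 n,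
        (k : ℝ) / (n : ℝ) * ∑ i, x i
          ≤ ∑ i ∈ Finset.Icc 1 k, x ⟨(kstar + i - 1) % n, Nat.mod_lt _ hn⟩ := by
  -- surjectivity of k ↦ (kstar + k) % n on [1, n]
  have hsurj : ∀ kstar : ℕ, ∀ m < n, ∃ k, 1 ≤ k ∧ k ≤ n ∧ (kstar + k) % n = m := by
    intro kstar m hm
    have hq := Nat.div_add_mod kstar n
    have hr : kstar % n < n := Nat.mod_lt _ hn
    rcases Nat.lt_or_ge (kstar % n) m with h | h
    · refine ⟨m - kstar % n, by omega, by omega, ?_⟩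
      have : kstar + (m - kstar % n) = n * (kstar / n) + m := by omega
      rw [this, Nat.mul_add_mod, Nat.mod_eq_of_lt hm]
    · refine ⟨m + n - kstar % n, by omega, by omega, ?_⟩
      have : kstar + (m + n - kstar % n) = n * (kstar / n) + (n + m) := by omega
      rw [this, Nat.mul_add_mod, Nat.add_mod_left, Nat.mod_eq_of_lt hm]
  -- the condition is equivalent to being a minimum of Qw on [0, n)
  have hiff : ∀ kstar : ℕ,
      (∀ k ∈ Finset.Icc 1 n,
        (k : ℝ) / (n : ℝ) * ∑ i, x i
          ≤ ∑ i ∈ Finset.Icc 1 k, x ⟨(kstar + i - 1) % n, Nat.mod_lt _ hn⟩)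
      ↔ (∀ m < n, Qw n hn x (kstar % n) ≤ Qw n hn x m) := by
    intro kstar
    constructor
    · intro h m hm
      obtain ⟨k, hk1, hkn, hkm⟩ := hsurj kstar m hm
      have := (cond_iff n hn x kstar k hk1).mp (h k (Finset.mem_Icc.mpr ⟨hk1, hkn⟩))
      rw [Qw_mod n hn x kstar, Qw_mod n hn x (kstar + k), hkm] at this
      exact this
    · intro h k hk
      rw [Finset.mem_Icc] at hk
      rw [cond_iff n hn x kstar k hk.1, Qw_mod n hn x kstar, Qw_mod n hn x (kstar + k)]
      exact h _ (Nat.mod_lt _ hn)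
  -- minimum of Qw on range n
  obtain ⟨p, hp, hpmin⟩ := Finset.exists_min_image (Finset.range n) (Qw n hn x)
    ⟨0, Finset.mem_range.mpr hn⟩
  rw [Finset.mem_range] at hp
  set kstar := if p = 0 then n else p with hks
  have hksmod : kstar % n = p := by
    rw [hks]
    split
    · simp [*, Nat.mod_self]
    · exact Nat.mod_eq_of_lt hp
  have hksmem : kstar ∈ Finset.Icc 1 n := by
    rw [Finset.mem_Icc, hks]
    split <;> omega
  refine ⟨kstar, ⟨hksmem, ?_⟩, ?_⟩
  · rw [hiff kstar, hksmod]
    intro m hm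
    exact hpmin m (Finset.mem_range.mpr hm)
  · rintro k' ⟨hk'mem, hk'cond⟩
    rw [Finset.mem_Icc] at hk'mem
    rw [hiff k'] at hk'cond
    have h1 : Qw n hn x (k' % n) ≤ Qw n hn x p := hk'cond p hp
    have h2 : Qw n hn x p ≤ Qw n hn x (k' % n) :=
      hpmin _ (Finset.mem_range.mpr (Nat.mod_lt _ hn))
    have heq : k' % n = p :=
      Qw_inj n hn x hmeans (k' % n) p (Nat.mod_lt _ hn) hp (le_antisymm h1 h2)
    rcases Nat.lt_or_ge k' n with h | h
    · rw [Nat.mod_eq_of_lt h] at heq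
      rw [hks]
      split
      · omega
      · omega
    · have hk'n : k' = n := le_antisymm hk'mem.2 h
      rw [hk'n, Nat.mod_self] at heq
      rw [hks, hk'n]
      simp [heq.symm]
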